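/- First main Pfaffian identity for symplectic Schubert polynomials: let λ be a strict partition with λ₁ ≤ n and length ℓ ≥ 3, and set r = 2⌊(ℓ+1)/2⌋. Define C'_μ(X) = ∂₀(Q̃_μ(X)) for partitions μ of positive length. Then ∑_{j=1}^{r-1} (-1)^{j-1} C'_{λ_j,λ_r}(X) · C'_{λ∖{λ_j,λ_r}}(X) = 0 in ℤ[x₁,...,x_n]. -/

import Mathlib

open MvPolynomial

/-- The `i`-th elementary symmetric polynomial in the variables `{X j : j ∈ S}`,
i.e. `Q̃_i` on the variable set `S`. -/
noncomputable def Qt (S : Finset ℕ) (i : ℕ) : MvPolynomial ℕ ℤ :=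
  ∑ t ∈ Finset.powersetCard i S, ∏ j ∈ t, X j

/-- The two-row `Q̃`-polynomial
`Q̃_{i,j} = Q̃_i Q̃_j + 2 ∑_{k=1}^{j} (-1)^k Q̃_{i+k} Q̃_{j-k}` (for `i ≥ j`). -/
noncomputable def Qtp (S : Finset ℕ) (i j : ℕ) : MvPolynomial ℕ ℤ :=
  Qt S i * Qt S j +
    2 * ∑ k ∈ Finset.Icc 1 j, (-1 : MvPolynomial ℕ ℤ) ^ k * Qt S (i + k) * Qt S (j - k)

/-- Fuel-based Laplace (Pfaffian) recursion for `Q̃_λ` on a list of parts of even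
length: `Q̃_ν = ∑_{j} (-1)^{j-1} Q̃_{ν_j,ν_r} Q̃_{ν∖{ν_j,ν_r}}`. -/
noncomputable def Qpf (S : Finset ℕ) : ℕ → List ℕ → MvPolynomial ℕ ℤ
  | 0, _ => 1
  | fuel + 1, l =>
    if l.length < 2 then 1
    else
      ∑ j ∈ Finset.range (l.length - 1),
        (-1 : MvPolynomial ℕ ℤ) ^ j * Qtp S (l.getD j 0) (l.getLast?.getD 0) *
          Qpf S fuel (l.dropLast.eraseIdx j)

/-- `Q̃_λ` for a partition `λ` (list of parts), padding with a zero part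
to make the length even. -/
noncomputable def Qlam (S : Finset ℕ) (l : List ℕ) : MvPolynomial ℕ ℤ :=
  Qpf S (l.length + 1) (if Even l.length then l else l ++ [0])

/-- The operator `s₀`, replacing `x₁ = X 0` by `-x₁`. -/
noncomputable def s0 : MvPolynomial ℕ ℤ →+* MvPolynomial ℕ ℤ :=
  (MvPolynomial.bind₁ fun j => if j = 0 then -(X 0 : MvPolynomial ℕ ℤ) else X j).toRingHom

namespace PfaffianAux

/-! ### Index-skipping combinatorics -/

def skip (j i : ℕ) : ℕ := if i < j then i else i + 1

lemma skip_lt {j i : ℕ} (h : i < j) : skip j i = i := if_pos h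

lemma skip_ge {j i : ℕ} (h : j ≤ i) : skip j i = i + 1 := if_neg (by omega)

lemma skip_lt_skip {j : ℕ} {p q : ℕ} (h : p < q) : skip j p < skip j q := by
  unfold skip; split <;> split <;> omega

lemma skip_comm {a b : ℕ} (h : a ≤ b) (x : ℕ) :
    skip a (skip b x) = skip (b + 1) (skip a x) := by
  unfold skip; split_ifs <;> omega

section Abstract

variable {R : Type*} [CommRing R]

/-- Abstract Pfaffian-style Laplace recursion on index functions. -/
noncomputable def pfh (A : ℕ → ℕ → R) : ℕ → (ℕ → ℕ) → R
  | 0, _ => 1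
  | k + 1, f =>
    ∑ j ∈ Finset.range (2 * k + 1),
      (-1 : R) ^ j * A (f j) (f (2 * k + 1)) * pfh A k (fun i => f (skip j i))

lemma pfh_congr (A : ℕ → ℕ → R) :
    ∀ (k : ℕ) (f g : ℕ → ℕ), (∀ i, i < 2 * k → f i = g i) → pfh A k f = pfh A k g
  | 0, _, _, _ => rfl
  | k + 1, f, g, h => by
    simp only [pfh]
    refine Finset.sum_congr rfl fun j hj => ?_
    simp only [Finset.mem_range] at hj
    rw [h j (by omega), h (2 * k + 1) (by omega),
      pfh_congr A k _ _ (fun i hi => h (skip j i) (by unfold skip; split <;> omega))]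

lemma map_pfh {R' : Type*} [CommRing R'] (φ : R →+* R') (A : ℕ → ℕ → R) :
    ∀ (k : ℕ) (f : ℕ → ℕ), φ (pfh A k f) = pfh (fun a b => φ (A a b)) k f
  | 0, _ => map_one φ
  | k + 1, f => by
    simp only [pfh, map_sum, map_mul, map_pow, map_neg, map_one]
    exact Finset.sum_congr rfl fun j hj => by rw [map_pfh φ A k]

/-! ### Triple-sum regrouping machinery -/

def pairsLT (M : ℕ) : Finset (ℕ × ℕ) :=
  (Finset.range M ×ˢ Finset.range M).filter fun z => z.2 < z.1

lemma range_filter_lt {M q : ℕ} (h : q ≤ M) :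
    (Finset.range M).filter (fun p => p < q) = Finset.range q := by
  ext a; simp only [Finset.mem_filter, Finset.mem_range]; omega

lemma sum_pairsLT {M : ℕ} (g : ℕ → ℕ → R) :
    ∑ q ∈ Finset.range M, ∑ p ∈ Finset.range q, g q p = ∑ z ∈ pairsLT M, g z.1 z.2 := by
  rw [pairsLT, Finset.sum_filter, Finset.sum_product]
  refine Finset.sum_congr rfl fun q hq => ?_
  simp only [Finset.mem_range] at hq
  rw [← Finset.sum_filter, range_filter_lt (by omega)]

def Tset (s : ℕ) : Finset (ℕ × ℕ × ℕ) :=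
  (Finset.range s ×ˢ Finset.range s ×ˢ Finset.range s).filter
    fun t => t.2.1 < t.2.2 ∧ t.1 ≠ t.2.1 ∧ t.1 ≠ t.2.2

/-- The canonical triple sum. -/
noncomputable def canon (W : ℕ → ℕ → ℕ → R) (s : ℕ) : R :=
  ∑ t ∈ Tset s, (-1 : R) ^ (t.1 + t.2.1 + t.2.2) *
    (if t.2.1 < t.1 ∧ t.1 < t.2.2 then -1 else 1) * W t.1 t.2.1 t.2.2

def unskip (x y : ℕ) : ℕ := if x < y then y - 1 else y

lemma tripa (W : ℕ → ℕ → ℕ → R) (s : ℕ) :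
    ∑ j ∈ Finset.range s, ∑ q ∈ Finset.range (s - 1), ∑ p ∈ Finset.range q,
      (-1 : R) ^ (j + p + q) * W j (skip j p) (skip j q) = canon W s := by
  have h1 : ∀ j ∈ Finset.range s,
      (∑ q ∈ Finset.range (s - 1), ∑ p ∈ Finset.range q,
        (-1 : R) ^ (j + p + q) * W j (skip j p) (skip j q))
      = ∑ z ∈ pairsLT (s - 1), (-1 : R) ^ (j + z.2 + z.1) * W j (skip j z.2) (skip j z.1) :=
    fun j _ => sum_pairsLT _
  rw [Finset.sum_congr rfl h1, ← Finset.sum_product']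
  refine Finset.sum_nbij' (fun x => (x.1, skip x.1 x.2.2, skip x.1 x.2.1))
    (fun t => (t.1, (unskip t.1 t.2.2, unskip t.1 t.2.1))) ?_ ?_ ?_ ?_ ?_
  · rintro ⟨j, q, p⟩ hm
    simp only [Tset, pairsLT, Finset.mem_filter, Finset.mem_product, Finset.mem_range,
      Prod.mk.injEq, eq_self_iff_true, true_and, and_true] at hm ⊢
    try dsimp only at hm ⊢
    try simp only [skip, unskip]
    split_ifs <;> first | trivial | omega
  · rintro ⟨x, u, v⟩ hm
    simp only [Tset, pairsLT, Finset.mem_filter, Finset.mem_product, Finset.mem_range,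
      Prod.mk.injEq, eq_self_iff_true, true_and, and_true] at hm ⊢
    try dsimp only at hm ⊢
    try simp only [skip, unskip]
    split_ifs <;> first | trivial | omega
  · rintro ⟨j, q, p⟩ hm
    simp only [Tset, pairsLT, Finset.mem_filter, Finset.mem_product, Finset.mem_range,
      Prod.mk.injEq, eq_self_iff_true, true_and, and_true] at hm ⊢
    try dsimp only at hm ⊢
    try simp only [skip, unskip]
    split_ifs <;> first | trivial | omega
  · rintro ⟨x, u, v⟩ hm
    simp only [Tset, pairsLT, Finset.mem_filter, Finset.mem_product, Finset.mem_range,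
      Prod.mk.injEq, eq_self_iff_true, true_and, and_true] at hm ⊢
    try dsimp only at hm ⊢
    try simp only [skip, unskip]
    split_ifs <;> first | trivial | omega
  · rintro ⟨j, q, p⟩ hm
    simp only [Finset.mem_product, Finset.mem_range, pairsLT, Finset.mem_filter] at hm
    try dsimp only at hm ⊢
    obtain ⟨hj, ⟨hq, hp⟩, hpq⟩ := hm
    rcases le_or_gt j p with h | h
    · rw [skip_ge h, skip_ge (by omega : j ≤ q)]
      rw [if_neg (by omega : ¬(p + 1 < j ∧ j < q + 1))]
      rw [show j + (p + 1) + (q + 1) = (j + p + q) + 2 by omega, pow_add]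
      ring
    · rcases le_or_gt j q with h2 | h2
      · rw [skip_lt h, skip_ge h2, if_pos (⟨h, by omega⟩ : p < j ∧ j < q + 1),
          show j + p + (q + 1) = (j + p + q) + 1 by omega, pow_succ]
        ring
      · rw [skip_lt h, skip_lt h2, if_neg (by omega : ¬(p < j ∧ j < q))]
        ring

lemma tripb (W : ℕ → ℕ → ℕ → R) (s : ℕ) :
    ∑ q ∈ Finset.range s, ∑ p ∈ Finset.range q, ∑ i ∈ Finset.range (s - 2),
      (-1 : R) ^ (p + q + i) * W (skip q (skip p i)) p q = canon W s := by
  have h1 : (∑ q ∈ Finset.range s, ∑ p ∈ Finset.range q, ∑ i ∈ Finset.range (s - 2),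
      (-1 : R) ^ (p + q + i) * W (skip q (skip p i)) p q)
      = ∑ z ∈ pairsLT s, ∑ i ∈ Finset.range (s - 2),
          (-1 : R) ^ (z.2 + z.1 + i) * W (skip z.1 (skip z.2 i)) z.2 z.1 := sum_pairsLT _
  rw [h1, ← Finset.sum_product']
  refine Finset.sum_nbij' (fun x => (skip x.1.1 (skip x.1.2 x.2), x.1.2, x.1.1))
    (fun t => ((t.2.2, t.2.1),
      if t.1 < t.2.1 then t.1 else if t.1 < t.2.2 then t.1 - 1 else t.1 - 2)) ?_ ?_ ?_ ?_ ?_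
  · rintro ⟨⟨q, p⟩, i⟩ hm
    simp only [Tset, pairsLT, Finset.mem_filter, Finset.mem_product, Finset.mem_range,
      Prod.mk.injEq, eq_self_iff_true, true_and, and_true] at hm ⊢
    try dsimp only at hm ⊢
    try simp only [skip, unskip]
    split_ifs <;> first | trivial | omega
  · rintro ⟨x, u, v⟩ hm
    simp only [Tset, pairsLT, Finset.mem_filter, Finset.mem_product, Finset.mem_range,
      Prod.mk.injEq, eq_self_iff_true, true_and, and_true] at hm ⊢
    try dsimp only at hm ⊢
    try simp only [skip, unskip]
    split_ifs <;> first | trivial | omega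
  · rintro ⟨⟨q, p⟩, i⟩ hm
    simp only [Tset, pairsLT, Finset.mem_filter, Finset.mem_product, Finset.mem_range,
      Prod.mk.injEq, eq_self_iff_true, true_and, and_true] at hm ⊢
    try dsimp only at hm ⊢
    try simp only [skip, unskip]
    split_ifs <;> first | trivial | omega
  · rintro ⟨x, u, v⟩ hm
    simp only [Tset, pairsLT, Finset.mem_filter, Finset.mem_product, Finset.mem_range,
      Prod.mk.injEq, eq_self_iff_true, true_and, and_true] at hm ⊢
    try dsimp only at hm ⊢
    try simp only [skip, unskip]
    split_ifs <;> first | trivial | omega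
  · rintro ⟨⟨q, p⟩, i⟩ hm
    simp only [Finset.mem_product, Finset.mem_range, pairsLT, Finset.mem_filter] at hm
    try dsimp only at hm ⊢
    obtain ⟨⟨⟨hq, hp⟩, hpq⟩, hi⟩ := hm
    rcases lt_or_ge i p with h | h
    · rw [skip_lt h, skip_lt (by omega : i < q), if_neg (by omega : ¬(p < i ∧ i < q)),
        show i + p + q = p + q + i by omega]
      ring
    · rcases lt_or_ge (i + 1) q with h2 | h2
      · rw [skip_ge h, skip_lt h2, if_pos (⟨by omega, h2⟩ : p < i + 1 ∧ i + 1 < q),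
          show i + 1 + p + q = (p + q + i) + 1 by omega, pow_succ]
        ring
      · rw [skip_ge h, skip_ge h2, if_neg (by omega : ¬(p < i + 2 ∧ i + 2 < q)),
          show i + 1 + 1 + p + q = (p + q + i) + 2 by omega, pow_add]
        ring

lemma canon_zero (W : ℕ → ℕ → ℕ → R) (s : ℕ)
    (hW : ∀ a b c, a < b → b < c → W a b c - W b a c + W c a b = 0) :
    canon W s = 0 := by
  classical
  unfold canon
  rw [← Finset.sum_filter_add_sum_filter_not (Tset s) (fun t => t.1 < t.2.1)]
  rw [← Finset.sum_filter_add_sum_filter_not ((Tset s).filter fun t => ¬ t.1 < t.2.1)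
    (fun t => t.1 < t.2.2)]
  have e2 : ∑ t ∈ ((Tset s).filter fun t => ¬ t.1 < t.2.1).filter (fun t => t.1 < t.2.2),
      (-1 : R) ^ (t.1 + t.2.1 + t.2.2) *
        (if t.2.1 < t.1 ∧ t.1 < t.2.2 then -1 else 1) * W t.1 t.2.1 t.2.2
      = ∑ t ∈ (Tset s).filter (fun t => t.1 < t.2.1),
        (-1 : R) ^ (t.1 + t.2.1 + t.2.2) * (-1) * W t.2.1 t.1 t.2.2 := by
    refine Finset.sum_nbij' (fun t => (t.2.1, t.1, t.2.2)) (fun t => (t.2.1, t.1, t.2.2))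
      ?_ ?_ ?_ ?_ ?_
    · rintro ⟨x, u, v⟩ hm
      simp only [Tset, Finset.mem_filter, Finset.mem_product, Finset.mem_range] at hm ⊢
      try dsimp only at hm ⊢
      omega
    · rintro ⟨x, u, v⟩ hm
      simp only [Tset, Finset.mem_filter, Finset.mem_product, Finset.mem_range] at hm ⊢
      try dsimp only at hm ⊢
      omega
    · rintro ⟨x, u, v⟩ _; rfl
    · rintro ⟨x, u, v⟩ _; rfl
    · rintro ⟨x, u, v⟩ hm
      simp only [Tset, Finset.mem_filter, Finset.mem_product, Finset.mem_range] at hm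
      try dsimp only at hm ⊢
      rw [if_pos (⟨by omega, by omega⟩ : u < x ∧ x < v),
        show x + u + v = u + x + v by omega]
      try ring
  have e3 : ∑ t ∈ ((Tset s).filter fun t => ¬ t.1 < t.2.1).filter (fun t => ¬ t.1 < t.2.2),
      (-1 : R) ^ (t.1 + t.2.1 + t.2.2) *
        (if t.2.1 < t.1 ∧ t.1 < t.2.2 then -1 else 1) * W t.1 t.2.1 t.2.2
      = ∑ t ∈ (Tset s).filter (fun t => t.1 < t.2.1),
        (-1 : R) ^ (t.1 + t.2.1 + t.2.2) * W t.2.2 t.1 t.2.1 := by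
    refine Finset.sum_nbij' (fun t => (t.2.1, t.2.2, t.1)) (fun t => (t.2.2, t.1, t.2.1))
      ?_ ?_ ?_ ?_ ?_
    · rintro ⟨x, u, v⟩ hm
      simp only [Tset, Finset.mem_filter, Finset.mem_product, Finset.mem_range] at hm ⊢
      try dsimp only at hm ⊢
      omega
    · rintro ⟨x, u, v⟩ hm
      simp only [Tset, Finset.mem_filter, Finset.mem_product, Finset.mem_range] at hm ⊢
      try dsimp only at hm ⊢
      omega
    · rintro ⟨x, u, v⟩ _; rfl
    · rintro ⟨x, u, v⟩ _; rfl
    · rintro ⟨x, u, v⟩ hm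
      simp only [Tset, Finset.mem_filter, Finset.mem_product, Finset.mem_range] at hm
      try dsimp only at hm ⊢
      rw [if_neg (by omega : ¬(u < x ∧ x < v)), show x + u + v = u + v + x by omega]
      try ring
  rw [e2, e3]
  have : ∀ t ∈ (Tset s).filter (fun t => t.1 < t.2.1),
      ((-1 : R) ^ (t.1 + t.2.1 + t.2.2) *
        (if t.2.1 < t.1 ∧ t.1 < t.2.2 then -1 else 1) * W t.1 t.2.1 t.2.2)
      + (((-1 : R) ^ (t.1 + t.2.1 + t.2.2) * (-1) * W t.2.1 t.1 t.2.2)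
      + ((-1 : R) ^ (t.1 + t.2.1 + t.2.2) * W t.2.2 t.1 t.2.1)) = 0 := by
    rintro ⟨x, u, v⟩ hm
    simp only [Tset, Finset.mem_filter, Finset.mem_product, Finset.mem_range] at hm
    try dsimp only at hm ⊢
    rw [if_neg (by omega)]
    have h0 := hW x u v (by omega) (by omega)
    linear_combination ((-1 : R) ^ (x + u + v)) * h0
  rw [← Finset.sum_add_distrib, ← Finset.sum_add_distrib]
  exact Finset.sum_eq_zero this


/-! ### Rank-2 perturbation of the Pfaffian recursion -/

def Cf (U V : ℕ → R) : ℕ → ℕ → R := fun a b => U a * V b - U b * V a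

noncomputable def Ff (G : ℕ → ℕ → R) (U V : ℕ → R) : ℕ → ℕ → R :=
  fun a b => G a b + Cf U V a b

lemma pluecker (U V : ℕ → R) (w x y z : ℕ) :
    Cf U V x w * Cf U V y z - Cf U V y w * Cf U V x z + Cf U V z w * Cf U V x y = 0 := by
  simp only [Cf]; ring

/-- Canonical triple erasure. -/
def er3 (f : ℕ → ℕ) (x y z : ℕ) : ℕ → ℕ :=
  fun i => f (skip (max x (max y z)) (skip (x + y + z - max x (max y z) - min x (min y z))
    (skip (min x (min y z)) i)))

lemma er3_symm₁ (f : ℕ → ℕ) (x y z : ℕ) : er3 f x y z = er3 f y x z := by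
  unfold er3
  rw [show max x (max y z) = max y (max x z) by omega,
    show min x (min y z) = min y (min x z) by omega,
    show x + y + z = y + x + z by omega]

lemma er3_symm₂ (f : ℕ → ℕ) (x y z : ℕ) : er3 f x y z = er3 f z x y := by
  unfold er3
  rw [show max x (max y z) = max z (max x y) by omega,
    show min x (min y z) = min z (min x y) by omega,
    show x + y + z = z + x + y by omega]

lemma norm1 (f : ℕ → ℕ) {p q : ℕ} (j : ℕ) (hpq : p < q) (i : ℕ) :
    f (skip j (skip q (skip p i))) = er3 f j (skip j p) (skip j q) i := by
  rcases le_or_gt j p with h | h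
  · rw [skip_ge h, skip_ge (by omega : j ≤ q)]
    unfold er3
    rw [show max j (max (p + 1) (q + 1)) = q + 1 by omega,
      show min j (min (p + 1) (q + 1)) = j by omega,
      show j + (p + 1) + (q + 1) - (q + 1) - j = p + 1 by omega,
      skip_comm (by omega : j ≤ q) (skip p i), skip_comm h i]
  · rcases le_or_gt j q with h2 | h2
    · rw [skip_lt h, skip_ge h2]
      unfold er3
      rw [show max j (max p (q + 1)) = q + 1 by omega,
        show min j (min p (q + 1)) = p by omega,
        show j + p + (q + 1) - (q + 1) - p = j by omega,
        skip_comm h2 (skip p i)]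
    · rw [skip_lt h, skip_lt h2]
      unfold er3
      rw [show max j (max p q) = j by omega,
        show min j (min p q) = p by omega,
        show j + p + q - j - p = q by omega]

lemma norm2 (f : ℕ → ℕ) {p q : ℕ} (hpq : p < q) (i y : ℕ) :
    f (skip q (skip p (skip i y))) = er3 f (skip q (skip p i)) p q y := by
  rcases lt_or_ge i p with h | h
  · rw [skip_lt h, skip_lt (by omega : i < q)]
    unfold er3
    rw [show max i (max p q) = q by omega, show min i (min p q) = i by omega,
      show i + p + q - q - i = p by omega]
  · rcases lt_or_ge (i + 1) q with h2 | h2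
    · rw [skip_ge h, skip_lt h2]
      unfold er3
      rw [show max (i + 1) (max p q) = q by omega,
        show min (i + 1) (min p q) = p by omega,
        show i + 1 + p + q - q - p = i + 1 by omega,
        skip_comm h y]
    · rw [skip_ge h, skip_ge (by omega : q ≤ i + 1)]
      unfold er3
      rw [show max (i + 1 + 1) (max p q) = i + 1 + 1 by omega,
        show min (i + 1 + 1) (min p q) = p by omega,
        show i + 1 + 1 + p + q - (i + 1 + 1) - p = q by omega,
        skip_comm h y, skip_comm h2 (skip p y)]

noncomputable def ES (G : ℕ → ℕ → R) (U V : ℕ → R) (m : ℕ) (f : ℕ → ℕ) : R :=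
  ∑ q ∈ Finset.range (2 * m + 2), ∑ p ∈ Finset.range q,
    (-1 : R) ^ (p + q + 1) * Cf U V (f p) (f q) * pfh G m (fun i => f (skip q (skip p i)))

lemma zstep (G : ℕ → ℕ → R) (U V : ℕ → R) (m : ℕ)
    (hE : ∀ f : ℕ → ℕ, pfh (Ff G U V) (m + 1) f = pfh G (m + 1) f + ES G U V m f)
    (f : ℕ → ℕ) (b : ℕ) :
    ∑ j ∈ Finset.range (2 * m + 3),
      (-1 : R) ^ j * Cf U V (f j) b *
        (pfh (Ff G U V) (m + 1) (fun i => f (skip j i))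
          - pfh G (m + 1) (fun i => f (skip j i))) = 0 := by
  have hdiff : ∀ j : ℕ,
      pfh (Ff G U V) (m + 1) (fun i => f (skip j i))
        - pfh G (m + 1) (fun i => f (skip j i))
        = ES G U V m (fun i => f (skip j i)) := fun j => by
    rw [hE (fun i => f (skip j i))]; ring
  have step1 : (∑ j ∈ Finset.range (2 * m + 3),
      (-1 : R) ^ j * Cf U V (f j) b *
        (pfh (Ff G U V) (m + 1) (fun i => f (skip j i))
          - pfh G (m + 1) (fun i => f (skip j i))))
      = ∑ j ∈ Finset.range (2 * m + 3), ∑ q ∈ Finset.range (2 * m + 2),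
          ∑ p ∈ Finset.range q, (-1 : R) ^ (j + p + q) *
            (fun x y z => -(Cf U V (f x) b * (Cf U V (f y) (f z) * pfh G m (er3 f x y z))))
              j (skip j p) (skip j q) := by
    refine Finset.sum_congr rfl fun j _ => ?_
    rw [hdiff j, ES, Finset.mul_sum]
    refine Finset.sum_congr rfl fun q hq => ?_
    rw [Finset.mul_sum]
    refine Finset.sum_congr rfl fun p hp => ?_
    simp only [Finset.mem_range] at hq hp
    have harg : (fun i => f (skip j (skip q (skip p i)))) = er3 f j (skip j p) (skip j q) :=
      funext fun i => norm1 f j hp i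
    dsimp only
    rw [harg, pow_succ, pow_add, pow_add, pow_add]
    ring
  rw [step1]
  have ta := tripa (fun x y z =>
    -(Cf U V (f x) b * (Cf U V (f y) (f z) * pfh G m (er3 f x y z)))) (2 * m + 3)
  rw [show 2 * m + 3 - 1 = 2 * m + 2 by omega] at ta
  rw [ta]
  refine canon_zero _ _ fun a c d hac hcd => ?_
  rw [← er3_symm₁ f a c d, ← er3_symm₂ f a c d]
  linear_combination (-(pfh G m (er3 f a c d))) * pluecker U V b (f a) (f c) (f d)

lemma exp_main (G : ℕ → ℕ → R) (U V : ℕ → R) (m : ℕ) : ∀ f : ℕ → ℕ,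
    pfh (Ff G U V) (m + 1) f = pfh G (m + 1) f + ES G U V m f := by
  induction m with
  | zero =>
    intro f
    simp only [pfh, ES, Ff, Finset.sum_range_succ, Finset.sum_range_zero,
      Finset.sum_range_one]
    norm_num
  | succ m ih =>
    intro f
    have hL : pfh (Ff G U V) (m + 1 + 1) f
        = ∑ j ∈ Finset.range (2 * m + 3),
            (-1 : R) ^ j * Ff G U V (f j) (f (2 * m + 3)) *
              pfh (Ff G U V) (m + 1) (fun i => f (skip j i)) := by
      conv_lhs => rw [pfh]
      simp only [show 2 * (m + 1) + 1 = 2 * m + 3 from by ring]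
    have hG : pfh G (m + 1 + 1) f
        = ∑ j ∈ Finset.range (2 * m + 3),
            (-1 : R) ^ j * G (f j) (f (2 * m + 3)) *
              pfh G (m + 1) (fun i => f (skip j i)) := by
      conv_lhs => rw [pfh]
      simp only [show 2 * (m + 1) + 1 = 2 * m + 3 from by ring]
    have hsplit : ∀ j : ℕ,
        (-1 : R) ^ j * Ff G U V (f j) (f (2 * m + 3)) *
            pfh (Ff G U V) (m + 1) (fun i => f (skip j i))
          = (-1 : R) ^ j * G (f j) (f (2 * m + 3)) * pfh G (m + 1) (fun i => f (skip j i))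
            + ((-1 : R) ^ j * Cf U V (f j) (f (2 * m + 3)) *
                pfh (Ff G U V) (m + 1) (fun i => f (skip j i))
              + (-1 : R) ^ j * G (f j) (f (2 * m + 3)) * ES G U V m (fun i => f (skip j i))) := by
      intro j
      rw [ih (fun i => f (skip j i))]
      simp only [Ff]
      ring
    have hES : ES G U V (m + 1) f
        = (∑ q ∈ Finset.range (2 * m + 3), ∑ p ∈ Finset.range q,
            (-1 : R) ^ (p + q + 1) * Cf U V (f p) (f q) *
              pfh G (m + 1) (fun i => f (skip q (skip p i))))
          + ∑ p ∈ Finset.range (2 * m + 3),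
            (-1 : R) ^ p * Cf U V (f p) (f (2 * m + 3)) *
              pfh G (m + 1) (fun i => f (skip p i)) := by
      rw [ES]
      simp only [show 2 * (m + 1) + 2 = 2 * m + 3 + 1 from by ring]
      rw [Finset.sum_range_succ]
      congr 1
      refine Finset.sum_congr rfl fun p hp => ?_
      simp only [Finset.mem_range] at hp
      have h1 : (-1 : R) ^ (p + (2 * m + 3) + 1) = (-1) ^ p := by
        rw [show p + (2 * m + 3) + 1 = p + 2 * (m + 2) by ring, pow_add, pow_mul]
        norm_num
      have h2 : pfh G (m + 1) (fun i => f (skip (2 * m + 3) (skip p i)))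
          = pfh G (m + 1) (fun i => f (skip p i)) :=
        pfh_congr G (m + 1) _ _ (fun i hi => by
          rw [skip_lt (show skip p i < 2 * m + 3 by unfold skip; split <;> omega)])
      rw [h1, h2]
    have hC1 : (∑ j ∈ Finset.range (2 * m + 3),
        (-1 : R) ^ j * Cf U V (f j) (f (2 * m + 3)) *
          pfh (Ff G U V) (m + 1) (fun i => f (skip j i)))
        = ∑ p ∈ Finset.range (2 * m + 3),
            (-1 : R) ^ p * Cf U V (f p) (f (2 * m + 3)) *
              pfh G (m + 1) (fun i => f (skip p i)) := by
      have h := zstep G U V m ih f (f (2 * m + 3))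
      have expand : (∑ j ∈ Finset.range (2 * m + 3),
          (-1 : R) ^ j * Cf U V (f j) (f (2 * m + 3)) *
            (pfh (Ff G U V) (m + 1) (fun i => f (skip j i))
              - pfh G (m + 1) (fun i => f (skip j i))))
          = (∑ j ∈ Finset.range (2 * m + 3),
              (-1 : R) ^ j * Cf U V (f j) (f (2 * m + 3)) *
                pfh (Ff G U V) (m + 1) (fun i => f (skip j i)))
            - ∑ p ∈ Finset.range (2 * m + 3),
              (-1 : R) ^ p * Cf U V (f p) (f (2 * m + 3)) *
                pfh G (m + 1) (fun i => f (skip p i)) := by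
        rw [← Finset.sum_sub_distrib]
        exact Finset.sum_congr rfl fun j _ => by ring
      rw [expand] at h
      exact sub_eq_zero.mp h
    have hC2 : (∑ j ∈ Finset.range (2 * m + 3),
        (-1 : R) ^ j * G (f j) (f (2 * m + 3)) * ES G U V m (fun i => f (skip j i)))
        = ∑ q ∈ Finset.range (2 * m + 3), ∑ p ∈ Finset.range q,
            (-1 : R) ^ (p + q + 1) * Cf U V (f p) (f q) *
              pfh G (m + 1) (fun i => f (skip q (skip p i))) := by
      have ta := tripa (fun x y z =>
        -(G (f x) (f (2 * m + 3)) * (Cf U V (f y) (f z) * pfh G m (er3 f x y z)))) (2 * m + 3)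
      have tb := tripb (fun x y z =>
        -(G (f x) (f (2 * m + 3)) * (Cf U V (f y) (f z) * pfh G m (er3 f x y z)))) (2 * m + 3)
      rw [show 2 * m + 3 - 1 = 2 * m + 2 by omega] at ta
      rw [show 2 * m + 3 - 2 = 2 * m + 1 by omega] at tb
      have hLts : (∑ j ∈ Finset.range (2 * m + 3),
          (-1 : R) ^ j * G (f j) (f (2 * m + 3)) * ES G U V m (fun i => f (skip j i)))
          = ∑ j ∈ Finset.range (2 * m + 3), ∑ q ∈ Finset.range (2 * m + 2),
              ∑ p ∈ Finset.range q, (-1 : R) ^ (j + p + q) *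
                (fun x y z => -(G (f x) (f (2 * m + 3)) *
                  (Cf U V (f y) (f z) * pfh G m (er3 f x y z)))) j (skip j p) (skip j q) := by
        refine Finset.sum_congr rfl fun j _ => ?_
        rw [ES, Finset.mul_sum]
        refine Finset.sum_congr rfl fun q hq => ?_
        rw [Finset.mul_sum]
        refine Finset.sum_congr rfl fun p hp => ?_
        simp only [Finset.mem_range] at hq hp
        have harg : (fun i => f (skip j (skip q (skip p i)))) = er3 f j (skip j p) (skip j q) :=
          funext fun i => norm1 f j hp i
        dsimp only
        rw [harg, pow_succ, pow_add, pow_add, pow_add]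
        ring
      have hRts : (∑ q ∈ Finset.range (2 * m + 3), ∑ p ∈ Finset.range q,
          (-1 : R) ^ (p + q + 1) * Cf U V (f p) (f q) *
            pfh G (m + 1) (fun i => f (skip q (skip p i))))
          = ∑ q ∈ Finset.range (2 * m + 3), ∑ p ∈ Finset.range q,
              ∑ i ∈ Finset.range (2 * m + 1), (-1 : R) ^ (p + q + i) *
                (fun x y z => -(G (f x) (f (2 * m + 3)) *
                  (Cf U V (f y) (f z) * pfh G m (er3 f x y z)))) (skip q (skip p i)) p q := by
        refine Finset.sum_congr rfl fun q hq => Finset.sum_congr rfl fun p hp => ?_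
        simp only [Finset.mem_range] at hq hp
        conv_lhs => rw [pfh]
        rw [Finset.mul_sum]
        refine Finset.sum_congr rfl fun i hi => ?_
        simp only [Finset.mem_range] at hi
        dsimp only
        have hg1 : f (skip q (skip p (2 * m + 1))) = f (2 * m + 3) := by
          rw [skip_ge (by omega : p ≤ 2 * m + 1), skip_ge (by omega : q ≤ 2 * m + 1 + 1),
            show 2 * m + 1 + 1 + 1 = 2 * m + 3 by ring]
        have hg2 : (fun y => f (skip q (skip p (skip i y)))) = er3 f (skip q (skip p i)) p q :=
          funext fun y => norm2 f hp i y
        rw [hg1, hg2, pow_succ, pow_add, pow_add, pow_add]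
        ring
      rw [hLts, ta, hRts, tb]
    calc pfh (Ff G U V) (m + 1 + 1) f
        = ∑ j ∈ Finset.range (2 * m + 3),
            ((-1 : R) ^ j * G (f j) (f (2 * m + 3)) * pfh G (m + 1) (fun i => f (skip j i))
            + ((-1 : R) ^ j * Cf U V (f j) (f (2 * m + 3)) *
                pfh (Ff G U V) (m + 1) (fun i => f (skip j i))
              + (-1 : R) ^ j * G (f j) (f (2 * m + 3)) *
                ES G U V m (fun i => f (skip j i)))) := by
          rw [hL]; exact Finset.sum_congr rfl fun j _ => hsplit j
      _ = (∑ j ∈ Finset.range (2 * m + 3),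
            (-1 : R) ^ j * G (f j) (f (2 * m + 3)) * pfh G (m + 1) (fun i => f (skip j i)))
          + ((∑ j ∈ Finset.range (2 * m + 3),
              (-1 : R) ^ j * Cf U V (f j) (f (2 * m + 3)) *
                pfh (Ff G U V) (m + 1) (fun i => f (skip j i)))
            + ∑ j ∈ Finset.range (2 * m + 3),
              (-1 : R) ^ j * G (f j) (f (2 * m + 3)) * ES G U V m (fun i => f (skip j i))) := by
          rw [Finset.sum_add_distrib, Finset.sum_add_distrib]
      _ = pfh G (m + 1 + 1) f + ES G U V (m + 1) f := by
          rw [hC1, hC2, ← hG, hES]; ring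

lemma z_main (G : ℕ → ℕ → R) (U V : ℕ → R) (k : ℕ) (f : ℕ → ℕ) (b : ℕ) :
    ∑ j ∈ Finset.range (2 * k + 1),
      (-1 : R) ^ j * Cf U V (f j) b *
        (pfh (Ff G U V) k (fun i => f (skip j i)) - pfh G k (fun i => f (skip j i))) = 0 := by
  cases k with
  | zero => simp [pfh]
  | succ m =>
    have h := zstep G U V m (exp_main G U V m) f b
    rw [show 2 * (m + 1) + 1 = 2 * m + 3 by ring]
    exact h

end Abstract


/-! ### The `Q̃`-polynomial side -/

noncomputable def Af (n : ℕ) (i : ℕ) : MvPolynomial ℕ ℤ := Qt ((Finset.range n).erase 0) i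

noncomputable def Bf (n : ℕ) : ℕ → MvPolynomial ℕ ℤ
  | 0 => 0
  | i + 1 => Qt ((Finset.range n).erase 0) i

lemma s0_X (j : ℕ) : s0 (X j) = if j = 0 then -(X 0 : MvPolynomial ℕ ℤ) else X j := by
  show (MvPolynomial.bind₁ _) (X j) = _
  rw [MvPolynomial.bind₁_X_right]

lemma s0_Qt_erase (n i : ℕ) :
    s0 (Qt ((Finset.range n).erase 0) i) = Qt ((Finset.range n).erase 0) i := by
  unfold Qt
  rw [map_sum]
  refine Finset.sum_congr rfl fun t ht => ?_
  rw [map_prod]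
  refine Finset.prod_congr rfl fun j hj => ?_
  have hj0 : j ≠ 0 := by
    have hsub := (Finset.mem_powersetCard.mp ht).1 hj
    exact (Finset.mem_erase.mp hsub).1
  rw [s0_X, if_neg hj0]

lemma Qt_zero (S : Finset ℕ) : Qt S 0 = 1 := by
  simp [Qt]

lemma Qt_split (n : ℕ) (hn : 0 < n) (i : ℕ) :
    Qt (Finset.range n) (i + 1)
      = Qt ((Finset.range n).erase 0) (i + 1) + X 0 * Qt ((Finset.range n).erase 0) i := by
  have h0 : (0 : ℕ) ∈ Finset.range n := Finset.mem_range.mpr hn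
  have h0' : (0 : ℕ) ∉ (Finset.range n).erase 0 := Finset.notMem_erase _ _
  have hdisj : Disjoint (((Finset.range n).erase 0).powersetCard (i + 1))
      ((((Finset.range n).erase 0).powersetCard i).image (insert 0)) := by
    rw [Finset.disjoint_left]
    rintro t ht hti
    obtain ⟨u, hu, rfl⟩ := Finset.mem_image.mp hti
    have h1 : (0 : ℕ) ∈ insert 0 u := Finset.mem_insert_self _ _
    have h2 := (Finset.mem_powersetCard.mp ht).1 h1
    exact absurd h2 (Finset.notMem_erase _ _)
  have hinj : ∀ x ∈ ((Finset.range n).erase 0).powersetCard i,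
      ∀ y ∈ ((Finset.range n).erase 0).powersetCard i, insert 0 x = insert 0 y → x = y := by
    intro x hx y hy hxy
    have hx0 : (0 : ℕ) ∉ x := fun h =>
      absurd ((Finset.mem_powersetCard.mp hx).1 h) (Finset.notMem_erase _ _)
    have hy0 : (0 : ℕ) ∉ y := fun h =>
      absurd ((Finset.mem_powersetCard.mp hy).1 h) (Finset.notMem_erase _ _)
    rw [← Finset.erase_insert hx0, hxy, Finset.erase_insert hy0]
  simp only [Qt]
  conv_lhs => rw [← Finset.insert_erase h0]
  rw [Finset.powersetCard_succ_insert h0', Finset.sum_union hdisj, Finset.sum_image hinj,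
    Finset.mul_sum]
  congr 1
  refine Finset.sum_congr rfl fun t ht => ?_
  have ht0 : (0 : ℕ) ∉ t := fun h =>
    absurd ((Finset.mem_powersetCard.mp ht).1 h) (Finset.notMem_erase _ _)
  rw [Finset.prod_insert ht0]

lemma Qt_decomp (n : ℕ) (hn : 0 < n) :
    ∀ i, Qt (Finset.range n) i = Af n i + X 0 * Bf n i
  | 0 => by simp [Qt_zero, Af, Bf]
  | i + 1 => by rw [Qt_split n hn i]; rfl

lemma s0_Af (n i : ℕ) : s0 (Af n i) = Af n i := s0_Qt_erase n i

lemma s0_Bf (n : ℕ) : ∀ i, s0 (Bf n i) = Bf n i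
  | 0 => map_zero _
  | i + 1 => s0_Qt_erase n i

lemma s0_Qt (n : ℕ) (hn : 0 < n) (i : ℕ) :
    s0 (Qt (Finset.range n) i) = Af n i - X 0 * Bf n i := by
  rw [Qt_decomp n hn i, map_add, map_mul, s0_X, if_pos rfl, s0_Af, s0_Bf]
  ring

lemma sum_Icc_one {M : Type*} [AddCommMonoid M] (g : ℕ → M) :
    ∀ b : ℕ, ∑ k ∈ Finset.Icc 1 b, g k = ∑ k ∈ Finset.range b, g (k + 1)
  | 0 => by simp
  | b + 1 => by
    rw [Finset.sum_Icc_succ_top (by omega), Finset.sum_range_succ, sum_Icc_one g b]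

lemma two_row (n : ℕ) (hn : 0 < n) (a b : ℕ) :
    Qtp (Finset.range n) a b - s0 (Qtp (Finset.range n) a b)
      = Cf (fun a => 2 * X 0 * Bf n a) (Af n) a b := by
  have key : Af n a * Bf n b + ∑ k ∈ Finset.Icc 1 b,
      (-1 : MvPolynomial ℕ ℤ) ^ k *
        (Af n (a + k) * Bf n (b - k) + Bf n (a + k) * Af n (b - k)) = 0 := by
    have tele : ∀ (T : ℕ → MvPolynomial ℕ ℤ) (c : ℕ),
        ∑ k ∈ Finset.range c, (-1 : MvPolynomial ℕ ℤ) ^ (k + 1) * (T (k + 1) + T k)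
          = (-1) ^ c * T c - T 0 := by
      intro T c
      induction c with
      | zero => simp
      | succ c ihc => rw [Finset.sum_range_succ, ihc, pow_succ]; ring
    rw [sum_Icc_one]
    have hcong : ∀ k ∈ Finset.range b,
        (-1 : MvPolynomial ℕ ℤ) ^ (k + 1) *
          (Af n (a + (k + 1)) * Bf n (b - (k + 1)) + Bf n (a + (k + 1)) * Af n (b - (k + 1)))
        = (-1 : MvPolynomial ℕ ℤ) ^ (k + 1) *
          ((fun k => Af n (a + k) * Bf n (b - k)) (k + 1)
            + (fun k => Af n (a + k) * Bf n (b - k)) k) := by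
      intro k hk
      simp only [Finset.mem_range] at hk
      have e1 : Bf n (a + (k + 1)) = Af n (a + k) := rfl
      have e2 : Bf n (b - k) = Af n (b - (k + 1)) := by
        rw [show b - k = (b - (k + 1)) + 1 by omega]; rfl
      dsimp only
      rw [e1, ← e2]
    rw [Finset.sum_congr rfl hcong, tele (fun k => Af n (a + k) * Bf n (b - k)) b]
    simp only [Nat.sub_self, Nat.add_zero, Nat.sub_zero, Bf, mul_zero, zero_mul]
    ring
  have hsum : (∑ k ∈ Finset.Icc 1 b,
        (-1 : MvPolynomial ℕ ℤ) ^ k * Qt (Finset.range n) (a + k) * Qt (Finset.range n) (b - k))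
      - (∑ k ∈ Finset.Icc 1 b, (-1 : MvPolynomial ℕ ℤ) ^ k *
          s0 (Qt (Finset.range n) (a + k)) * s0 (Qt (Finset.range n) (b - k)))
      = 2 * X 0 * ∑ k ∈ Finset.Icc 1 b, (-1 : MvPolynomial ℕ ℤ) ^ k *
          (Af n (a + k) * Bf n (b - k) + Bf n (a + k) * Af n (b - k)) := by
    rw [← Finset.sum_sub_distrib, Finset.mul_sum]
    refine Finset.sum_congr rfl fun k _ => ?_
    rw [s0_Qt n hn (a + k), s0_Qt n hn (b - k), Qt_decomp n hn (a + k), Qt_decomp n hn (b - k)]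
    ring
  simp only [Qtp, map_add, map_mul, map_sum, map_pow, map_neg, map_one, map_ofNat]
  rw [s0_Qt n hn a, s0_Qt n hn b, Qt_decomp n hn a, Qt_decomp n hn b]
  simp only [Cf]
  linear_combination 2 * hsum + 4 * (X 0 : MvPolynomial ℕ ℤ) * key

/-! ### Bridge from `Qpf` to `pfh` -/

lemma getLast_getD (l : List ℕ) (k : ℕ) (hk : l.length = 2 * k + 2) :
    l.getLast?.getD 0 = l.getD (2 * k + 1) 0 := by
  rw [List.getLast?_eq_getElem?, List.getD_eq_getElem?_getD, hk,
    show 2 * k + 2 - 1 = 2 * k + 1 by omega]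

lemma getD_rest (l : List ℕ) (k j : ℕ) (hk : l.length = 2 * k + 2) (hj : j < 2 * k + 1)
    (i : ℕ) (hi : i < 2 * k) :
    (l.dropLast.eraseIdx j).getD i 0 = l.getD (skip j i) 0 := by
  have hdl : l.dropLast.length = 2 * k + 1 := by rw [List.length_dropLast]; omega
  have hrl : (l.dropLast.eraseIdx j).length = 2 * k := by
    rw [List.length_eraseIdx, hdl, if_pos hj] <;> omega
  have hb1 : i < (l.dropLast.eraseIdx j).length := by omega
  have hb2 : skip j i < l.length := by unfold skip; split <;> omega
  rcases lt_or_ge i j with h | h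
  · rw [skip_lt h, List.getD_eq_getElem?_getD, List.getD_eq_getElem?_getD,
      List.getElem?_eraseIdx_of_lt h]
    congr 1
    rw [List.getElem?_eq_getElem (by omega : i < l.dropLast.length),
      List.getElem?_eq_getElem (by omega : i < l.length), List.getElem_dropLast]
  · rw [skip_ge h, List.getD_eq_getElem?_getD, List.getD_eq_getElem?_getD,
      List.getElem?_eraseIdx_of_ge h]
    congr 1
    rw [List.getElem?_eq_getElem (by omega : i + 1 < l.dropLast.length),
      List.getElem?_eq_getElem (by omega : i + 1 < l.length), List.getElem_dropLast]

lemma Qpf_pfh (n : ℕ) : ∀ (k fuel : ℕ), k ≤ fuel → ∀ l : List ℕ, l.length = 2 * k →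
    Qpf (Finset.range n) fuel l = pfh (Qtp (Finset.range n)) k (fun i => l.getD i 0)
  | 0, fuel, hf, l, hl => by
    cases fuel with
    | zero => rfl
    | succ fu => rw [Qpf, if_pos (by omega)]; rfl
  | k + 1, fuel, hf, l, hl => by
    obtain ⟨fu, rfl⟩ : ∃ fu, fuel = fu + 1 := ⟨fuel - 1, by omega⟩
    have hk2 : l.length = 2 * k + 2 := by omega
    have hdl : l.dropLast.length = 2 * k + 1 := by rw [List.length_dropLast]; omega
    rw [Qpf, if_neg (by omega : ¬ l.length < 2)]
    conv_rhs => rw [pfh]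
    rw [show l.length - 1 = 2 * k + 1 by omega]
    refine Finset.sum_congr rfl fun j hj => ?_
    simp only [Finset.mem_range] at hj
    have hrl : (l.dropLast.eraseIdx j).length = 2 * k := by
      rw [List.length_eraseIdx, hdl, if_pos hj] <;> omega
    rw [getLast_getD l k hk2, Qpf_pfh n k fu (by omega) (l.dropLast.eraseIdx j) hrl,
      pfh_congr (Qtp (Finset.range n)) k _ _ (fun i hi => getD_rest l k j hk2 hj i hi)]

lemma Qlam_pair (S : Finset ℕ) (a b : ℕ) : Qlam S [a, b] = Qtp S a b := by
  rw [Qlam]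
  norm_num
  rw [Qpf, if_neg (by norm_num)]
  norm_num [Finset.sum_range_one]
  rw [Qpf, if_pos (by norm_num)]
  ring

lemma main_aux (n k : ℕ) (hn : 0 < n) (l : List ℕ) (hk : l.length = 2 * k + 2)
    (Cp : List ℕ → MvPolynomial ℕ ℤ)
    (hCp : ∀ mu, 2 * X 0 * Cp mu
      = Qlam (Finset.range n) mu - s0 (Qlam (Finset.range n) mu)) :
    (∑ j ∈ Finset.range (l.length - 1),
      (-1 : MvPolynomial ℕ ℤ) ^ j * Cp [l.getD j 0, l.getLast?.getD 0] *
        Cp (l.dropLast.eraseIdx j)) = 0 := by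
  have h2 : (2 : MvPolynomial ℕ ℤ) ≠ 0 := by norm_num
  have hX : (2 * X 0 : MvPolynomial ℕ ℤ) * (2 * X 0) ≠ 0 :=
    mul_ne_zero (mul_ne_zero h2 (MvPolynomial.X_ne_zero 0))
      (mul_ne_zero h2 (MvPolynomial.X_ne_zero 0))
  apply mul_left_cancel₀ hX
  rw [mul_zero, Finset.mul_sum, show l.length - 1 = 2 * k + 1 by omega]
  have hz := z_main (fun a b => s0 (Qtp (Finset.range n) a b))
    (fun a => 2 * X 0 * Bf n a) (Af n) k (fun i => l.getD i 0) (l.getD (2 * k + 1) 0)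
  rw [← hz]
  refine Finset.sum_congr rfl fun j hj => ?_
  simp only [Finset.mem_range] at hj
  have hdl : l.dropLast.length = 2 * k + 1 := by rw [List.length_dropLast]; omega
  have hrl : (l.dropLast.eraseIdx j).length = 2 * k := by
    rw [List.length_eraseIdx, hdl, if_pos hj] <;> omega
  have e0 : 2 * X 0 * Cp [l.getD j 0, l.getLast?.getD 0]
      = Cf (fun a => 2 * X 0 * Bf n a) (Af n) (l.getD j 0) (l.getD (2 * k + 1) 0) := by
    rw [hCp, Qlam_pair, getLast_getD l k hk, two_row n hn]
  have ebase : Qlam (Finset.range n) (l.dropLast.eraseIdx j)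
      = pfh (Qtp (Finset.range n)) k (fun i => l.getD (skip j i) 0) := by
    have hev : Even (2 * k) := even_two_mul k
    rw [Qlam, hrl, if_pos hev,
      Qpf_pfh n k (2 * k + 1) (by omega) _ hrl,
      pfh_congr (Qtp (Finset.range n)) k _ _ (fun i hi => getD_rest l k j hk hj i hi)]
  have e1 : Qlam (Finset.range n) (l.dropLast.eraseIdx j)
      = pfh (Ff (fun a b => s0 (Qtp (Finset.range n) a b))
          (fun a => 2 * X 0 * Bf n a) (Af n)) k (fun i => l.getD (skip j i) 0) := by
    rw [ebase]
    congr 1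
    funext a b
    have h := two_row n hn a b
    simp only [Ff]
    linear_combination h
  have e2 : s0 (Qlam (Finset.range n) (l.dropLast.eraseIdx j))
      = pfh (fun a b => s0 (Qtp (Finset.range n) a b)) k (fun i => l.getD (skip j i) 0) := by
    rw [ebase, map_pfh]
  calc 2 * X 0 * (2 * X 0) *
        ((-1 : MvPolynomial ℕ ℤ) ^ j * Cp [l.getD j 0, l.getLast?.getD 0] *
          Cp (l.dropLast.eraseIdx j))
      = (-1 : MvPolynomial ℕ ℤ) ^ j * (2 * X 0 * Cp [l.getD j 0, l.getLast?.getD 0]) *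
          (2 * X 0 * Cp (l.dropLast.eraseIdx j)) := by ring
    _ = (-1 : MvPolynomial ℕ ℤ) ^ j *
          Cf (fun a => 2 * X 0 * Bf n a) (Af n) (l.getD j 0) (l.getD (2 * k + 1) 0) *
          (pfh (Ff (fun a b => s0 (Qtp (Finset.range n) a b))
              (fun a => 2 * X 0 * Bf n a) (Af n)) k (fun i => l.getD (skip j i) 0)
            - pfh (fun a b => s0 (Qtp (Finset.range n) a b)) k
                (fun i => l.getD (skip j i) 0)) := by
        rw [e0, hCp, e2, e1]

end PfaffianAux

theorem first_pfaffian_identity (n : ℕ) (lam : List ℕ)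
    (hsort : List.Pairwise (· > ·) lam) (hpos : ∀ a ∈ lam, 0 < a)
    (hle : ∀ a ∈ lam, a ≤ n) (hlen : 3 ≤ lam.length)
    (Cp : List ℕ → MvPolynomial ℕ ℤ)
    (hCp : ∀ mu, 2 * X 0 * Cp mu
      = Qlam (Finset.range n) mu - s0 (Qlam (Finset.range n) mu)) :
    (let l := if Even lam.length then lam else lam ++ [0]
     ∑ j ∈ Finset.range (l.length - 1),
       (-1 : MvPolynomial ℕ ℤ) ^ j * Cp [l.getD j 0, l.getLast?.getD 0] *
         Cp (l.dropLast.eraseIdx j)) = 0 := by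
  have hne : lam ≠ [] := by
    intro h
    rw [h] at hlen
    simp at hlen
  have hn : 0 < n := by
    obtain ⟨a, ha⟩ := List.exists_mem_of_ne_nil lam hne
    exact lt_of_lt_of_le (hpos a ha) (hle a ha)
  by_cases he : Even lam.length
  · obtain ⟨c, hc⟩ := he
    obtain ⟨k, hk⟩ : ∃ k, lam.length = 2 * k + 2 := ⟨c - 1, by omega⟩
    rw [show (if Even lam.length then lam else lam ++ [0]) = lam from if_pos ⟨c, hc⟩]
    exact PfaffianAux.main_aux n k hn lam hk Cp hCp
  · have hodd : Odd lam.length := Nat.not_even_iff_odd.mp he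
    obtain ⟨c, hc⟩ := hodd
    have hk : (lam ++ [0]).length = 2 * c + 2 := by
      rw [List.length_append, hc]
      simp
    rw [show (if Even lam.length then lam else lam ++ [0]) = lam ++ [0] from if_neg he]
    exact PfaffianAux.main_aux n c hn (lam ++ [0]) hk Cp hCp
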